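/- (Generalized Slater CQ.) Suppose both the primal feasible set X(b) and the dual feasible set Y(c) are nonempty, and the primal is strictly feasible, i.e., there exists x ∈ relint C with b − A x ∈ relint K. Then strong duality holds: P* = D* and the dual is solvable, i.e., there exists y* ∈ Y(c) with ⟨b, y*⟩ = D*. -/

import Mathlib

open RealInnerProductSpace Set Pointwise

/-- A relative interior point can be pushed past any point of the set. -/
lemma relint_extend {F : Type*} [NormedAddCommGroup F] [NormedSpace ℝ F]
    {S : Set F} {xb x : F} (hxb : xb ∈ intrinsicInterior ℝ S) (hx : x ∈ S) :
    ∃ ε : ℝ, 0 < ε ∧ xb + ε • (xb - x) ∈ S := by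
  obtain ⟨z, hz, rfl⟩ := hxb
  have hxspan : x ∈ affineSpan ℝ S := subset_affineSpan ℝ S hx
  have hmem : ∀ t : ℝ, (z : F) + t • ((z : F) - x) ∈ affineSpan ℝ S := by
    intro t
    have := AffineSubspace.smul_vsub_vadd_mem (affineSpan ℝ S) t z.2 hxspan z.2
    simpa [vsub_eq_sub, vadd_eq_add, add_comm] using this
  set γ : ℝ → affineSpan ℝ S := fun t => ⟨(z : F) + t • ((z : F) - x), hmem t⟩ with hγ
  have hcont : Continuous γ := by
    apply Continuous.subtype_mk
    exact continuous_const.add (continuous_id.smul continuous_const)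
  have h0 : γ 0 = z := by
    apply Subtype.ext; simp [hγ]
  have hopen : IsOpen (γ ⁻¹' interior ((↑) ⁻¹' S : Set (affineSpan ℝ S))) :=
    isOpen_interior.preimage hcont
  have h0mem : (0 : ℝ) ∈ γ ⁻¹' interior ((↑) ⁻¹' S) := by
    simp only [mem_preimage, h0]; exact hz
  obtain ⟨ε, hε, hball⟩ := Metric.isOpen_iff.1 hopen 0 h0mem
  refine ⟨ε / 2, by linarith, ?_⟩
  have : (ε / 2 : ℝ) ∈ γ ⁻¹' interior ((↑) ⁻¹' S) := by
    apply hball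
    rw [Metric.mem_ball, Real.dist_eq, sub_zero, abs_of_pos (by linarith : (0:ℝ) < ε / 2)]
    linarith
  have h2 : γ (ε / 2) ∈ ((↑) ⁻¹' S : Set (affineSpan ℝ S)) := interior_subset this
  simpa [hγ] using h2

/-- Shrink the step size within a convex set. -/
lemma shrink_mem {F : Type*} [NormedAddCommGroup F] [NormedSpace ℝ F] {S : Set F}
    (hS : Convex ℝ S) {xb x : F} (hxb : xb ∈ S) {ε δ : ℝ} (hε : xb + ε • (xb - x) ∈ S)
    (hδ0 : 0 < δ) (hδε : δ ≤ ε) : xb + δ • (xb - x) ∈ S := by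
  have hε0 : 0 < ε := lt_of_lt_of_le hδ0 hδε
  have ha : (0:ℝ) ≤ 1 - δ / ε := by
    rw [sub_nonneg]; exact div_le_one_of_le₀ hδε hε0.le
  have hb : (0:ℝ) ≤ δ / ε := by positivity
  have h := hS hxb hε ha hb (by ring)
  have key : (1 - δ / ε) • xb + (δ / ε) • (xb + ε • (xb - x)) = xb + δ • (xb - x) := by
    have hc : δ / ε * ε = δ := div_mul_cancel₀ δ hε0.ne'
    rw [smul_add, smul_smul, hc]; module
  rwa [key] at h

/-- Proper separation of a point in the closure of a convex set from the set,
when the point is not in the relative interior. -/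
lemma proper_separation {F : Type*} [NormedAddCommGroup F] [NormedSpace ℝ F]
    [FiniteDimensional ℝ F] {S : Set F} (hS : Convex ℝ S) (hne : S.Nonempty) {z : F}
    (hzc : z ∈ closure S) (hz : z ∉ intrinsicInterior ℝ S) :
    ∃ g : F →L[ℝ] ℝ, (∀ s ∈ S, g s ≤ g z) ∧ ∃ s ∈ S, g s < g z := by
  have hzspan : z ∈ affineSpan ℝ S :=
    closure_minimal (subset_affineSpan ℝ S) (affineSpan ℝ S).closed_of_finiteDimensional hzc
  set V₀ : Submodule ℝ F := (affineSpan ℝ S).direction with hV₀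
  set T : Set V₀ := {v | z + (v : F) ∈ S} with hT
  have hTconv : Convex ℝ T := by
    intro v hv w hw a b ha hb hab
    have : z + ((a • v + b • w : V₀) : F) = a • (z + (v : F)) + b • (z + (w : F)) := by
      have h2 : a • (z + (v : F)) + b • (z + (w : F))
          = (a + b) • z + (a • (v : F) + b • (w : F)) := by module
      rw [h2, hab, one_smul]
      push_cast
      module
    show z + ((a • v + b • w : V₀) : F) ∈ S
    rw [this]
    exact hS hv hw ha hb hab
  have memT : ∀ (s : F) (hs : s ∈ S), (⟨s - z, by
      simpa [vsub_eq_sub] using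
        AffineSubspace.vsub_mem_direction (subset_affineSpan ℝ S hs) hzspan⟩ : V₀) ∈ T := by
    intro s hs
    show z + (s - z) ∈ S
    simpa using hs
  have hTne : T.Nonempty := by
    obtain ⟨s, hs⟩ := hne
    exact ⟨_, memT s hs⟩
  -- affine span of T is everything
  have hspanT : affineSpan ℝ T = ⊤ := by
    rw [← AffineSubspace.direction_eq_top_iff_of_nonempty
      (hTne.mono (subset_affineSpan ℝ T))]
    rw [direction_affineSpan]
    rw [Submodule.eq_top_iff']
    intro w
    have hw : (w : F) ∈ vectorSpan ℝ S := by
      rw [← direction_affineSpan]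
      exact w.2
    have hle : vectorSpan ℝ S ≤ (vectorSpan ℝ T).map V₀.subtype := by
      rw [vectorSpan_def, Submodule.span_le]
      rintro u ⟨s, hs, s', hs', rfl⟩
      have hm : ∀ (t : F), t ∈ S → t - z ∈ V₀ := fun t ht => by
        simpa [vsub_eq_sub] using
          AffineSubspace.vsub_mem_direction (subset_affineSpan ℝ S ht) hzspan
      refine ⟨(⟨s - z, hm s hs⟩ : V₀) - ⟨s' - z, hm s' hs'⟩, ?_,
        by simp [vsub_eq_sub, sub_sub_sub_cancel_right]⟩
      have := vsub_mem_vectorSpan ℝ (memT s hs) (memT s' hs')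
      simpa [vsub_eq_sub] using this
    obtain ⟨w', hw', hww⟩ := hle hw
    have : w' = w := Subtype.ext hww
    rwa [this] at hw'
  have hintne : (interior T).Nonempty :=
    (Convex.interior_nonempty_iff_affineSpan_eq_top hTconv).2 hspanT
  -- 0 is not in the interior of T
  have h0T : (0 : V₀) ∉ interior T := by
    intro h0
    apply hz
    set ψ : affineSpan ℝ S → V₀ := fun p => ⟨(p : F) - z, by
      simpa [vsub_eq_sub] using AffineSubspace.vsub_mem_direction p.2 hzspan⟩ with hψ
    have hψcont : Continuous ψ :=
      Continuous.subtype_mk (continuous_subtype_val.sub continuous_const) _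
    have hψT : ψ ⁻¹' T = ((↑) ⁻¹' S : Set (affineSpan ℝ S)) := by
      ext p
      show z + ((p : F) - z) ∈ S ↔ (p : F) ∈ S
      constructor <;> intro h <;> simpa using h
    set z' : affineSpan ℝ S := ⟨z, hzspan⟩ with hz'
    have hψz : ψ z' = 0 := by apply Subtype.ext; simp [hψ, hz']
    have : z' ∈ interior ((↑) ⁻¹' S : Set (affineSpan ℝ S)) := by
      rw [← hψT]
      apply interior_maximal (preimage_mono interior_subset)
        (isOpen_interior.preimage hψcont)
      show ψ z' ∈ interior T
      rw [hψz]; exact h0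
    exact ⟨z', this, rfl⟩
  obtain ⟨f, hf⟩ := geometric_hahn_banach_open_point hTconv.interior isOpen_interior h0T
  have hf0 : f 0 = 0 := map_zero f
  obtain ⟨v₀, hv₀⟩ := hintne
  have hfv₀ : f v₀ < 0 := by rw [← hf0]; exact hf v₀ hv₀
  have hfle : ∀ v ∈ T, f v ≤ 0 := by
    intro v hv
    by_contra hpos
    push_neg at hpos
    have hd : (0:ℝ) < f v - f v₀ := by linarith
    set a : ℝ := f v / (f v - f v₀) with ha'
    have ha : 0 < a := div_pos hpos hd
    have ha1 : a ≤ 1 := by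
      rw [div_le_one hd]; linarith
    have hmem := hTconv.combo_interior_self_mem_interior hv₀ hv ha
      (by linarith : (0:ℝ) ≤ 1 - a) (by ring)
    have := hf _ hmem
    rw [hf0, map_add, map_smul, map_smul] at this
    have hkey : a * (f v₀ - f v) = -f v := by
      rw [ha', div_mul_eq_mul_div, div_eq_iff hd.ne']
      ring
    simp only [smul_eq_mul] at this
    nlinarith
  obtain ⟨g, hg, -⟩ := exists_extension_norm_eq V₀ f
  refine ⟨g, ?_, ?_⟩
  · intro s hs
    have hm : s - z ∈ V₀ := by
      simpa [vsub_eq_sub] using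
        AffineSubspace.vsub_mem_direction (subset_affineSpan ℝ S hs) hzspan
    have h1 : g s - g z = f ⟨s - z, hm⟩ := by
      rw [← map_sub]
      exact hg ⟨s - z, hm⟩
    have h2 := hfle _ (memT s hs)
    have h3 : f ⟨s - z, hm⟩ ≤ 0 := h2
    linarith
  · refine ⟨z + (v₀ : F), (interior_subset (s := T) hv₀ :), ?_⟩
    have h1 : g (z + (v₀ : F)) - g z = f v₀ := by
      have : g (z + (v₀ : F)) - g z = g ((v₀ : F)) := by rw [← map_sub, add_sub_cancel_left]
      rw [this]; exact hg v₀
    linarith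

set_option maxHeartbeats 1000000

variable {E E' : Type*}
  [NormedAddCommGroup E] [InnerProductSpace ℝ E] [FiniteDimensional ℝ E]
  [NormedAddCommGroup E'] [InnerProductSpace ℝ E'] [FiniteDimensional ℝ E']

/-- A nonempty closed convex cone containing `0`. -/
structure IsClosedConvexCone {F : Type*} [NormedAddCommGroup F] [InnerProductSpace ℝ F]
    (K : Set F) : Prop where
  closed : IsClosed K
  convex : Convex ℝ K
  smul_mem : ∀ ⦃x⦄, x ∈ K → ∀ ⦃t : ℝ⦄, 0 ≤ t → t • x ∈ K
  zero_mem : (0 : F) ∈ K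

/-- The dual cone `S* = {y : ⟨x,y⟩ ≥ 0 ∀ x ∈ S}`. -/
def dualCone {F : Type*} [NormedAddCommGroup F] [InnerProductSpace ℝ F] (S : Set F) : Set F :=
  {y | ∀ x ∈ S, 0 ≤ ⟪x, y⟫}

/-- The polar cone `S° = {y : ⟨x,y⟩ ≤ 0 ∀ x ∈ S}`. -/
def polarCone {F : Type*} [NormedAddCommGroup F] [InnerProductSpace ℝ F] (S : Set F) : Set F :=
  {y | ∀ x ∈ S, ⟪x, y⟫ ≤ 0}

/-- Primal feasible set `X(b) = {x ∈ C : b - A x ∈ K}`. -/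
def Xfeas (A : E →ₗ[ℝ] E') (K : Set E') (C : Set E) (b : E') : Set E :=
  {x | x ∈ C ∧ b - A x ∈ K}

/-- Dual feasible set `Y(c) = {y ∈ K* : A* y - c ∈ C*}`. -/
def Yfeas (A : E →ₗ[ℝ] E') (K : Set E') (C : Set E) (c : E) : Set E' :=
  {y | y ∈ dualCone K ∧ LinearMap.adjoint A y - c ∈ dualCone C}

/-- Primal optimal value `P* = sup {⟨c,x⟩ : x ∈ X(b)}`. -/
noncomputable def Pval (A : E →ₗ[ℝ] E') (K : Set E') (C : Set E) (b : E') (c : E) : ℝ :=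
  sSup ((fun x => ⟪c, x⟫) '' Xfeas A K C b)

/-- Dual optimal value `D* = inf {⟨b,y⟩ : y ∈ Y(c)}`. -/
noncomputable def Dval (A : E →ₗ[ℝ] E') (K : Set E') (C : Set E) (b : E') (c : E) : ℝ :=
  sInf ((fun y => ⟪b, y⟫) '' Yfeas A K C c)

/-- Recession cone of the primal feasible region: `{x ∈ C : A x ∈ -K}`. -/
def recXSet (A : E →ₗ[ℝ] E') (K : Set E') (C : Set E) : Set E :=
  {x | x ∈ C ∧ A x ∈ -K}

/-- Recession cone of the dual feasible region: `{y ∈ K* : A* y ∈ C*}`. -/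
def recYSet (A : E →ₗ[ℝ] E') (K : Set E') (C : Set E) : Set E' :=
  {y | y ∈ dualCone K ∧ LinearMap.adjoint A y ∈ dualCone C}

/-- `X(b)` is almost feasible. -/
def AlmostFeasX (A : E →ₗ[ℝ] E') (K : Set E') (C : Set E) (b : E') : Prop :=
  ∀ ε : ℝ, 0 < ε → ∃ bε : E', ‖bε‖ ≤ ε ∧ (Xfeas A K C (b + bε)).Nonempty

/-- `Y(c)` is almost feasible. -/
def AlmostFeasY (A : E →ₗ[ℝ] E') (K : Set E') (C : Set E) (c : E) : Prop :=
  ∀ ε : ℝ, 0 < ε → ∃ cε : E, ‖cε‖ ≤ ε ∧ (Yfeas A K C (c + cε)).Nonempty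

theorem stmt1 (A : E →ₗ[ℝ] E') (K : Set E') (C : Set E)
    (hK : IsClosedConvexCone K) (hC : IsClosedConvexCone C) (b : E') (c : E)
    (hXne : (Xfeas A K C b).Nonempty) (hYne : (Yfeas A K C c).Nonempty)
    (hslater : ∃ x ∈ intrinsicInterior ℝ C, b - A x ∈ intrinsicInterior ℝ K) :
    Pval A K C b c = Dval A K C b c ∧
      ∃ y ∈ Yfeas A K C c, ⟪b, y⟫ = Dval A K C b c := by
  classical
  obtain ⟨x0, hx0C, hx0K⟩ := hXne
  obtain ⟨y0, hy0⟩ := hYne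
  obtain ⟨xs, hxsC, hxsK⟩ := hslater
  -- weak duality
  have wd : ∀ x ∈ Xfeas A K C b, ∀ y ∈ Yfeas A K C c, ⟪c, x⟫ ≤ ⟪b, y⟫ := by
    rintro x ⟨hxC, hxK⟩ y ⟨hyK, hyC⟩
    have h1 : (0:ℝ) ≤ ⟪b - A x, y⟫ := hyK _ hxK
    have h2 : (0:ℝ) ≤ ⟪x, LinearMap.adjoint A y - c⟫ := hyC x hxC
    have e : ⟪b - A x, y⟫ + ⟪x, LinearMap.adjoint A y - c⟫ = ⟪b, y⟫ - ⟪c, x⟫ := by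
      rw [inner_sub_left, inner_sub_right, LinearMap.adjoint_inner_right, real_inner_comm x c]
      ring
    linarith
  set Pv := Pval A K C b c with hPv
  have himne : ((fun x => ⟪c, x⟫) '' Xfeas A K C b).Nonempty :=
    ⟨_, ⟨x0, ⟨hx0C, hx0K⟩, rfl⟩⟩
  have hbddA : BddAbove ((fun x => ⟪c, x⟫) '' Xfeas A K C b) := by
    refine ⟨⟪b, y0⟫, ?_⟩
    rintro r ⟨x, hx, rfl⟩
    exact wd x hx y0 hy0
  have hPle : ∀ x ∈ Xfeas A K C b, ⟪c, x⟫ ≤ Pv := fun x hx => le_csSup hbddA ⟨x, hx, rfl⟩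
  have hPy : ∀ y ∈ Yfeas A K C c, Pv ≤ ⟪b, y⟫ := by
    intro y hy
    exact csSup_le himne (by rintro r ⟨x, hx, rfl⟩; exact wd x hx y hy)
  -- the perturbation set
  set V : Set (E' × ℝ) := {p | ∃ x ∈ C, ∃ k ∈ K, p.1 = b - A x - k ∧ p.2 ≤ ⟪c, x⟫} with hV
  have hVconv : Convex ℝ V := by
    rintro ⟨u1, t1⟩ ⟨x1, hx1, k1, hk1, hu1, ht1⟩ ⟨u2, t2⟩ ⟨x2, hx2, k2, hk2, hu2, ht2⟩
      a a' ha ha' haa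
    refine ⟨a • x1 + a' • x2, hC.convex hx1 hx2 ha ha' haa,
      a • k1 + a' • k2, hK.convex hk1 hk2 ha ha' haa, ?_, ?_⟩
    · show a • u1 + a' • u2 = b - A (a • x1 + a' • x2) - (a • k1 + a' • k2)
      subst hu1; subst hu2
      rw [map_add, map_smul, map_smul]
      have h2 : a • (b - A x1 - k1) + a' • (b - A x2 - k2)
          = (a + a') • b - (a • A x1 + a' • A x2) - (a • k1 + a' • k2) := by module
      rw [h2, haa, one_smul]
    · show a • t1 + a' • t2 ≤ ⟪c, a • x1 + a' • x2⟫
      rw [inner_add_right, real_inner_smul_right, real_inner_smul_right]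
      have := mul_le_mul_of_nonneg_left ht1 ha
      have := mul_le_mul_of_nonneg_left ht2 ha'
      simp only [smul_eq_mul]
      linarith
  set z : E' × ℝ := (0, Pv) with hz
  have hzcl : z ∈ closure V := by
    rw [Metric.mem_closure_iff]
    intro ε hε
    obtain ⟨r, ⟨x, hx, rfl⟩, hr⟩ := exists_lt_of_lt_csSup himne
      (show Pv - ε / 2 < Pv by linarith)
    refine ⟨(0, Pv - ε / 2), ⟨x, hx.1, b - A x, hx.2, by simp, by linarith⟩, ?_⟩
    rw [Prod.dist_eq]
    simp only [dist_self]
    rw [Real.dist_eq]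
    rw [max_eq_right]
    · rw [abs_of_pos (by linarith : (0:ℝ) < Pv - (Pv - ε / 2))]  -- fix shape below
      linarith
    · simp [hz]
  have hp0V : ((0 : E'), ⟪c, x0⟫ - 1) ∈ V :=
    ⟨x0, hx0C, b - A x0, hx0K, by simp,
      by show ⟪c, x0⟫ - 1 ≤ ⟪c, x0⟫; linarith⟩
  have hzni : z ∉ intrinsicInterior ℝ V := by
    intro hzint
    obtain ⟨ε, hε, hmem⟩ := relint_extend hzint hp0V
    have hzp : z + ε • (z - ((0 : E'), ⟪c, x0⟫ - 1))
        = ((0 : E'), Pv + ε * (Pv - (⟪c, x0⟫ - 1))) := by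
      rw [hz]
      refine Prod.ext ?_ ?_
      · simp
      · rfl
    rw [hzp] at hmem
    obtain ⟨x, hx, k, hk, hu, ht⟩ := hmem
    have hu' : (0 : E') = b - A x - k := hu
    have ht' : Pv + ε * (Pv - (⟪c, x0⟫ - 1)) ≤ ⟪c, x⟫ := ht
    have hbx : b - A x = k := sub_eq_zero.mp hu'.symm
    have hxfeas : x ∈ Xfeas A K C b := ⟨hx, by rw [hbx]; exact hk⟩
    have hle1 := hPle x hxfeas
    have hle0 := hPle x0 ⟨hx0C, hx0K⟩
    nlinarith
  obtain ⟨g, hle, p', hp'V, hstrict⟩ :=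
    proper_separation hVconv ⟨_, hp0V⟩ hzcl hzni
  set φ : E' →L[ℝ] ℝ := g.comp (ContinuousLinearMap.inl ℝ E' ℝ) with hφ
  set y1 : E' := (InnerProductSpace.toDual ℝ E').symm φ with hy1
  have hy1g : ∀ u : E', ⟪y1, u⟫ = g (u, 0) := by
    intro u
    rw [hy1, InnerProductSpace.toDual_symm_apply]
    rfl
  set β : ℝ := g (0, 1) with hβ
  have hdecomp : ∀ (u : E') (t : ℝ), g (u, t) = ⟪y1, u⟫ + t * β := by
    intro u t
    rw [hy1g]
    have h1 : ((u, t) : E' × ℝ) = (u, (0:ℝ)) + t • ((0 : E'), (1:ℝ)) := by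
      simp [Prod.ext_iff]
    rw [h1, map_add, map_smul, smul_eq_mul]
  have hgz : g z = Pv * β := by
    have : g z = g ((0 : E'), Pv) := rfl
    rw [this, hdecomp]
    simp
  have gineq : ∀ x ∈ C, ∀ k ∈ K, ∀ t : ℝ, t ≤ ⟪c, x⟫ →
      ⟪y1, b - A x - k⟫ + t * β ≤ Pv * β := by
    intro x hx k hk t ht
    have := hle (b - A x - k, t) ⟨x, hx, k, hk, rfl, ht⟩
    rwa [hdecomp, hgz] at this
  have hβ0 : 0 ≤ β := by
    by_contra hneg
    push_neg at hneg
    set t : ℝ := min ⟪c, x0⟫ ((Pv * β + 1) / β) with htdef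
    have h1 := gineq x0 hx0C (b - A x0) hx0K t (min_le_left _ _)
    have h2 : Pv * β + 1 ≤ t * β :=
      (le_div_iff_of_neg hneg).mp (min_le_right _ _)
    simp only [sub_self, inner_zero_right, zero_add] at h1
    linarith
  have master : ∀ x ∈ C, ∀ k ∈ K, ⟪y1, b - A x - k⟫ + ⟪c, x⟫ * β ≤ Pv * β :=
    fun x hx k hk => gineq x hx k hk _ le_rfl
  have hβne : β ≠ 0 := by
    intro hβz
    have hle0 : ∀ x ∈ C, ∀ k ∈ K, ⟪y1, b - A x - k⟫ ≤ 0 := by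
      intro x hx k hk
      have := master x hx k hk
      rw [hβz] at this
      simpa using this
    have heq0 : ∀ x ∈ C, ∀ k ∈ K, ⟪y1, b - A x - k⟫ = 0 := by
      intro x hx k hk
      obtain ⟨ε1, hε1, hm1⟩ := relint_extend hxsC hx
      obtain ⟨ε2, hε2, hm2⟩ := relint_extend hxsK hk
      have hδ0 : 0 < min ε1 ε2 := lt_min hε1 hε2
      have hc1 : xs + min ε1 ε2 • (xs - x) ∈ C :=
        shrink_mem hC.convex (intrinsicInterior_subset hxsC) hm1 hδ0 (min_le_left _ _)
      have hc2 : (b - A xs) + min ε1 ε2 • ((b - A xs) - k) ∈ K :=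
        shrink_mem hK.convex (intrinsicInterior_subset hxsK) hm2 hδ0 (min_le_right _ _)
      have key : b - A (xs + min ε1 ε2 • (xs - x))
            - ((b - A xs) + min ε1 ε2 • ((b - A xs) - k))
          = (-(min ε1 ε2)) • (b - A x - k) := by
        rw [map_add, map_smul, map_sub]
        module
      have h1 := hle0 x hx k hk
      have h2 := hle0 _ hc1 _ hc2
      rw [key, real_inner_smul_right] at h2
      nlinarith
    obtain ⟨x', hx', k', hk', hu', ht'⟩ := hp'V
    have hgp' : g p' = ⟪y1, b - A x' - k'⟫ := by
      calc g p' = g (p'.1, p'.2) := rfl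
        _ = ⟪y1, p'.1⟫ + p'.2 * β := hdecomp _ _
        _ = ⟪y1, b - A x' - k'⟫ := by rw [hu', hβz]; ring
    rw [hgp', hgz, hβz] at hstrict
    have := heq0 x' hx' k' hk'
    simp at hstrict
    linarith
  have hβpos : 0 < β := lt_of_le_of_ne hβ0 (Ne.symm hβne)
  -- membership of y1 in the scaled dual cone
  have hyK1 : ∀ k ∈ K, 0 ≤ ⟪y1, k⟫ := by
    intro k hk
    by_contra hneg
    push_neg at hneg
    have hnegk : 0 < -⟪y1, k⟫ := by linarith
    set s : ℝ := (|Pv * β| + 1 + |⟪y1, b⟫|) / (-⟪y1, k⟫) with hs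
    have hspos : 0 < s := div_pos (by positivity) hnegk
    have hsk : s * (-⟪y1, k⟫) = |Pv * β| + 1 + |⟪y1, b⟫| :=
      div_mul_cancel₀ _ hnegk.ne'
    have h1 := master 0 hC.zero_mem (s • k) (hK.smul_mem hk hspos.le)
    simp only [map_zero, sub_zero, inner_zero_right, zero_mul, add_zero] at h1
    rw [inner_sub_right, real_inner_smul_right] at h1
    have hsk' : s * ⟪y1, k⟫ = -(|Pv * β| + 1 + |⟪y1, b⟫|) := by
      rw [← hsk]; ring
    have := le_abs_self (Pv * β)
    have := neg_abs_le ⟪y1, b⟫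
    linarith
  have hyC1 : ∀ x ∈ C, β * ⟪c, x⟫ ≤ ⟪y1, A x⟫ := by
    intro x hx
    by_contra hneg
    push_neg at hneg
    have hdpos : 0 < ⟪c, x⟫ * β - ⟪y1, A x⟫ := by nlinarith
    set s : ℝ := (|Pv * β| + 1 + |⟪y1, b⟫|) / (⟪c, x⟫ * β - ⟪y1, A x⟫) with hs
    have hspos : 0 < s := div_pos (by positivity) hdpos
    have hsd : s * (⟪c, x⟫ * β - ⟪y1, A x⟫) = |Pv * β| + 1 + |⟪y1, b⟫| :=
      div_mul_cancel₀ _ hdpos.ne'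
    have h1 := master (s • x) (hC.smul_mem hx hspos.le) 0 hK.zero_mem
    rw [sub_zero, map_smul, inner_sub_right, real_inner_smul_right,
      real_inner_smul_right] at h1
    have e : s * ⟪y1, A x⟫ = s * ⟪c, x⟫ * β - (|Pv * β| + 1 + |⟪y1, b⟫|) := by
      rw [← hsd]; ring
    have := le_abs_self (Pv * β)
    have := neg_abs_le ⟪y1, b⟫
    linarith
  have hy1b : ⟪y1, b⟫ ≤ Pv * β := by
    have h1 := master 0 hC.zero_mem 0 hK.zero_mem
    simpa using h1
  set ystar : E' := β⁻¹ • y1 with hystar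
  have hymem : ystar ∈ Yfeas A K C c := by
    constructor
    · intro k hk
      rw [hystar, real_inner_smul_right]
      exact mul_nonneg (inv_nonneg.2 hβpos.le)
        (by rw [real_inner_comm]; exact hyK1 k hk)
    · intro x hx
      rw [inner_sub_right, LinearMap.adjoint_inner_right, sub_nonneg, hystar,
        real_inner_smul_right]
      have h1 := hyC1 x hx
      have h2 : ⟪A x, y1⟫ = ⟪y1, A x⟫ := real_inner_comm _ _
      have h3 : ⟪x, c⟫ = ⟪c, x⟫ := real_inner_comm _ _
      rw [h2, h3]
      calc ⟪c, x⟫ = β⁻¹ * (β * ⟪c, x⟫) := by field_simp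
        _ ≤ β⁻¹ * ⟪y1, A x⟫ :=
            mul_le_mul_of_nonneg_left h1 (inv_nonneg.2 hβpos.le)
  have hyb : ⟪b, ystar⟫ = Pv := by
    have h2 : ⟪b, ystar⟫ ≤ Pv := by
      rw [real_inner_comm, hystar, real_inner_smul_left]
      calc β⁻¹ * ⟪y1, b⟫ ≤ β⁻¹ * (Pv * β) :=
            mul_le_mul_of_nonneg_left hy1b (inv_nonneg.2 hβpos.le)
        _ = Pv := by field_simp
    exact le_antisymm h2 (hPy ystar hymem)
  have hdimne : ((fun y => ⟪b, y⟫) '' Yfeas A K C c).Nonempty :=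
    ⟨_, ⟨ystar, hymem, rfl⟩⟩
  have hdbdd : BddBelow ((fun y => ⟪b, y⟫) '' Yfeas A K C c) := by
    refine ⟨Pv, ?_⟩
    rintro r ⟨y, hy, rfl⟩
    exact hPy y hy
  have hDleP : Dval A K C b c ≤ Pv := by
    have h := csInf_le hdbdd (⟨ystar, hymem, rfl⟩ :
      ⟪b, ystar⟫ ∈ (fun y => ⟪b, y⟫) '' Yfeas A K C c)
    rw [hyb] at h
    exact h
  have hPleD : Pv ≤ Dval A K C b c :=
    le_csInf hdimne (by rintro r ⟨y, hy, rfl⟩; exact hPy y hy)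
  have hPD : Pv = Dval A K C b c := le_antisymm hPleD hDleP
  exact ⟨hPD, ystar, hymem, by rw [hyb, ← hPD]⟩
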